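/- arXiv:2507.11228 — 2 statements merged into one kernel-verified Lean document; each statement's English description precedes it below -/
import Mathlib

section
/- Fix w* > 0 and γ ∈ (1, 2), and define T(w) = w - (γ/σ'(w*))·(σ(w) - σ(w*)). If w_t > w* and w_{t+1} := T(w_t) < w*, then w_{t+2} := T(w_{t+1}) > w* (a crossing from right to left is immediately followed by a crossing back from left to right). -/
noncomputable def sigmoid (w : ℝ) : ℝ := 1 / (1 + Real.exp (-w))

open Real in
private lemma sigmoid_hasDerivAt (w : ℝ) :
    HasDerivAt _root_.sigmoid (Real.exp (-w) / (1 + Real.exp (-w)) ^ 2) w := by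
  have h0 : HasDerivAt (fun x : ℝ => Real.exp (-x)) (Real.exp (-w) * (-1)) w := by
    simpa using (hasDerivAt_id w).neg.exp
  have h1 : HasDerivAt (fun x : ℝ => 1 + Real.exp (-x)) (Real.exp (-w) * (-1)) w :=
    h0.const_add 1
  have h2 := h1.inv (by positivity)
  have h3 : (fun x : ℝ => (1 + Real.exp (-x))⁻¹) = _root_.sigmoid := by
    funext x; simp [_root_.sigmoid, one_div]
  rw [← h3]
  exact h2.congr_deriv (by ring)

private lemma aux_ineq {u : ℝ} (hu : 0 ≤ u) : 2 * Real.exp u ≤ u * Real.exp u + u + 2 := by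
  set g : ℝ → ℝ := fun y => y * Real.exp y + y + 2 - 2 * Real.exp y with hg
  have key : ∀ x : ℝ, HasDerivAt g (x * Real.exp x + 1 - Real.exp x) x := by
    intro x
    have h1 : HasDerivAt (fun y : ℝ => y * Real.exp y) (1 * Real.exp x + x * Real.exp x) x :=
      (hasDerivAt_id x).mul (Real.hasDerivAt_exp x)
    have h2 := ((h1.add (hasDerivAt_id x)).add_const 2).sub ((Real.hasDerivAt_exp x).const_mul 2)
    exact h2.congr_deriv (by ring)
  have hd : ∀ x : ℝ, 0 ≤ x → 0 ≤ deriv g x := by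
    intro x hx
    rw [(key x).deriv]
    have h1 : -x + 1 ≤ Real.exp (-x) := Real.add_one_le_exp (-x)
    have h2 : Real.exp (-x) * Real.exp x = 1 := by rw [← Real.exp_add]; simp
    nlinarith [Real.exp_pos x, mul_le_mul_of_nonneg_right h1 (Real.exp_pos x).le]
  have mono : MonotoneOn g (Set.Ici (0:ℝ)) := by
    apply monotoneOn_of_deriv_nonneg (convex_Ici 0)
    · fun_prop
    · intro x _; exact (key x).differentiableAt.differentiableWithinAt
    · intro x hx
      exact hd x (le_of_lt (by simpa using hx))
  have h0 : g 0 ≤ g u := mono Set.self_mem_Ici hu hu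
  simp only [hg] at h0
  norm_num at h0
  linarith

private lemma sigmoid_lt_sigmoid {x y : ℝ} (h : x < y) : sigmoid x < sigmoid y := by
  unfold sigmoid
  apply div_lt_div_of_pos_left one_pos (by positivity)
  have : Real.exp (-y) < Real.exp (-x) := Real.exp_lt_exp.mpr (by linarith)
  linarith

private lemma concave_bound {a D : ℝ} (ha0 : 0 < a) (ha1 : a < 1) (hD : 0 < D) :
    1 / (1 + a * Real.exp (-D)) - 1 / (1 + a) ≤ a / (1 + a) ^ 2 * D := by
  have hr0 : 0 < Real.exp (-D) := Real.exp_pos _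
  set r := Real.exp (-D) with hr_def
  have h1 : 1 - D ≤ r := by
    have := Real.add_one_le_exp (-D); rw [← hr_def] at *; linarith
  have h2 : 2 * (1 - r) ≤ D * (1 + r) := by
    have hL := aux_ineq hD.le
    have hrE : r * Real.exp D = 1 := by rw [hr_def, ← Real.exp_add]; simp
    nlinarith [mul_le_mul_of_nonneg_left hL hr0.le]
  have core : (1 - r) * (1 + a) ≤ D * (1 + a * r) := by
    nlinarith [mul_nonneg (by linarith : (0:ℝ) ≤ 1 - a) (by linarith : (0:ℝ) ≤ D - (1 - r)),
      mul_nonneg ha0.le (by linarith : (0:ℝ) ≤ D * (1 + r) - 2 * (1 - r))]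
  have p1 : (0:ℝ) < 1 + a * r := by positivity
  have p2 : (0:ℝ) < 1 + a := by positivity
  have e2 : a / (1 + a) ^ 2 * D = a * D / (1 + a) ^ 2 := by ring
  rw [div_sub_div _ _ p1.ne' p2.ne', e2, div_le_div_iff₀ (by positivity) (by positivity)]
  nlinarith [mul_le_mul_of_nonneg_left core (by positivity : (0:ℝ) ≤ a * (1 + a))]

private lemma main_bound {a δ : ℝ} (ha0 : 0 < a) (ha1 : a < 1) (hδ : 0 < δ) :
    δ * (a / (1 + a) ^ 2) < (1 + δ / (1 + a)) * (1 / (1 + a) - 1 / (1 + a * Real.exp δ)) := by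
  have hb : 1 + δ < Real.exp δ := by
    have := Real.add_one_lt_exp (ne_of_gt hδ); linarith
  have hb0 : (0:ℝ) < Real.exp δ := Real.exp_pos _
  set b := Real.exp δ with hb_def
  have hb1 : (1:ℝ) < b := by linarith
  have hC : δ * (1 + a * b) < (1 + a + δ) * (b - 1) := by
    nlinarith [mul_pos (by linarith : (0:ℝ) < b - 1 - δ) (by linarith : (0:ℝ) < 1 + a),
      mul_pos (mul_pos hδ (by linarith : (0:ℝ) < 1 - a)) (by linarith : (0:ℝ) < b - 1)]
  have p1 : (0:ℝ) < 1 + a := by positivity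
  have p2 : (0:ℝ) < 1 + a * b := by nlinarith
  have e1 : (1 + δ / (1 + a)) * (1 / (1 + a) - 1 / (1 + a * b))
      = ((1 + a + δ) * (a * (b - 1))) / ((1 + a) ^ 2 * (1 + a * b)) := by
    field_simp
    ring
  have e2 : δ * (a / (1 + a) ^ 2) = (δ * a) / ((1 + a) ^ 2) := by ring
  rw [e1, e2, div_lt_div_iff₀ (by positivity) (by positivity)]
  nlinarith [mul_lt_mul_of_pos_left hC (by positivity : (0:ℝ) < a * (1 + a) ^ 2)]

theorem double_crossing
    (wstar γ : ℝ) (hwstar : 0 < wstar) (hγ1 : 1 < γ) (hγ2 : γ < 2)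
    (T : ℝ → ℝ)
    (hT : ∀ w, T w = w - (γ / deriv sigmoid wstar) * (sigmoid w - sigmoid wstar))
    (wt : ℝ) (hwt : wstar < wt) (hcross : T wt < wstar) :
    wstar < T (T wt) := by
  have ha0 : (0:ℝ) < Real.exp (-wstar) := Real.exp_pos _
  set a : ℝ := Real.exp (-wstar) with ha_def
  have ha1 : a < 1 := by
    rw [ha_def]
    exact Real.exp_lt_one_iff.mpr (by linarith)
  have hd : deriv sigmoid wstar = a / (1 + a) ^ 2 := by
    rw [ha_def]; exact (sigmoid_hasDerivAt wstar).deriv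
  set c : ℝ := γ / (a / (1 + a) ^ 2) with hc_def
  have hc_eq : c = γ * ((1 + a) ^ 2 / a) := by rw [hc_def]; field_simp
  have hcpos : 0 < c := by rw [hc_def]; positivity
  set u := T wt with hu_def
  have hδpos : 0 < wstar - u := by linarith
  have hDpos : 0 < wt - wstar := by linarith
  have hs0 : sigmoid wstar = 1 / (1 + a) := by
    unfold sigmoid; rw [← ha_def]
  have hswt : sigmoid wt = 1 / (1 + a * Real.exp (-(wt - wstar))) := by
    unfold sigmoid
    rw [ha_def, ← Real.exp_add, show -wstar + -(wt - wstar) = -wt by ring]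
  have hsu : sigmoid u = 1 / (1 + a * Real.exp (wstar - u)) := by
    unfold sigmoid
    rw [ha_def, ← Real.exp_add, show -wstar + (wstar - u) = -u by ring]
  have hTwt : u = wt - c * (sigmoid wt - sigmoid wstar) := by
    rw [hu_def, hT wt, hd]
  have hδ_eq : wstar - u = c * (sigmoid wt - sigmoid wstar) - (wt - wstar) := by
    rw [hTwt]; ring
  have hP : 0 < sigmoid wt - sigmoid wstar := sub_pos.2 (sigmoid_lt_sigmoid hwt)
  have stepB : sigmoid wt - sigmoid wstar ≤ a / (1 + a) ^ 2 * (wt - wstar) := by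
    rw [hswt, hs0]
    exact concave_bound ha0 ha1 hDpos
  have bound1 : c * (sigmoid wt - sigmoid wstar) ≤ γ * (wt - wstar) := by
    calc c * (sigmoid wt - sigmoid wstar)
        ≤ c * (a / (1 + a) ^ 2 * (wt - wstar)) := by
          exact mul_le_mul_of_nonneg_left stepB hcpos.le
      _ = γ * (wt - wstar) := by rw [hc_eq]; field_simp
  have bound2 : sigmoid wt - sigmoid wstar ≤ a / (1 + a) := by
    have h1 : sigmoid wt < 1 := by
      unfold sigmoid
      rw [div_lt_one (by positivity)]
      have := Real.exp_pos (-wt); linarith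
    have h11 : 1 - 1 / (1 + a) = a / (1 + a) := by field_simp; ring
    rw [hs0]; linarith
  have bound3 : c * (sigmoid wt - sigmoid wstar) ≤ γ * (1 + a) := by
    calc c * (sigmoid wt - sigmoid wstar)
        ≤ c * (a / (1 + a)) := mul_le_mul_of_nonneg_left bound2 hcpos.le
      _ = γ * (1 + a) := by rw [hc_eq]; field_simp
  have hδle : wstar - u ≤ (γ - 1) * (1 + a) := by
    nlinarith [mul_le_mul_of_nonneg_left bound3 (by linarith : (0:ℝ) ≤ γ - 1)]
  have hγ_ge : 1 + (wstar - u) / (1 + a) ≤ γ := by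
    have h : (wstar - u) / (1 + a) ≤ γ - 1 := by
      rw [div_le_iff₀ (by positivity)]; linarith
    linarith
  have hmain := main_bound ha0 ha1 hδpos
  have hgap : 0 < sigmoid wstar - sigmoid u := sub_pos.2 (sigmoid_lt_sigmoid hcross)
  have hsg : sigmoid wstar - sigmoid u = 1 / (1 + a) - 1 / (1 + a * Real.exp (wstar - u)) := by
    rw [hs0, hsu]
  have hstep : wstar - u < (1 + (wstar - u) / (1 + a)) * ((1 + a) ^ 2 / a) * (sigmoid wstar - sigmoid u) := by
    have h := mul_lt_mul_of_pos_left hmain (by positivity : (0:ℝ) < (1 + a) ^ 2 / a)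
    rw [hsg]
    calc wstar - u = ((1 + a) ^ 2 / a) * ((wstar - u) * (a / (1 + a) ^ 2)) := by field_simp
      _ < ((1 + a) ^ 2 / a) * ((1 + (wstar - u) / (1 + a)) * (1 / (1 + a) - 1 / (1 + a * Real.exp (wstar - u)))) := h
      _ = (1 + (wstar - u) / (1 + a)) * ((1 + a) ^ 2 / a) * (1 / (1 + a) - 1 / (1 + a * Real.exp (wstar - u))) := by ring
  have hfin : (1 + (wstar - u) / (1 + a)) * ((1 + a) ^ 2 / a) * (sigmoid wstar - sigmoid u)
      ≤ c * (sigmoid wstar - sigmoid u) := by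
    apply mul_le_mul_of_nonneg_right _ hgap.le
    rw [hc_eq]
    exact mul_le_mul_of_nonneg_right hγ_ge (by positivity)
  have hkey : wstar - u < c * (sigmoid wstar - sigmoid u) := lt_of_lt_of_le hstep hfin
  have hgoal : T u = u - c * (sigmoid u - sigmoid wstar) := by rw [hT u, hd]
  rw [hgoal]
  linarith
end

section
/- Fix w* > 0 and γ ∈ (1,2), and let T(w) = w - (γ/σ'(w*))·(σ(w) - σ(w*)). Then T has exactly two critical points w_ℓ < 0 < w_r with w_ℓ = -w_r, determined by σ'(w_r) = σ'(w*)/γ; T'(w) > 0 for w < w_ℓ and w > w_r, and T'(w) < 0 on (w_ℓ, w_r); w_ℓ is a local maximum and w_r is a local minimum of T; and w* is the unique fixed point of T. -/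
noncomputable def sder (w : ℝ) : ℝ := Real.exp (-w) / (1 + Real.exp (-w))^2

lemma one_add_exp_pos (w : ℝ) : 0 < 1 + Real.exp (-w) := by positivity

lemma sigmoid_hasDerivAt_s18 (w : ℝ) : HasDerivAt sigmoid (sder w) w := by
  have h1 : HasDerivAt (fun x : ℝ => 1 + Real.exp (-x)) (-Real.exp (-w)) w := by
    have := ((Real.hasDerivAt_exp (-w)).comp w ((hasDerivAt_id w).neg))
    simpa using this.const_add 1
  have h2 : HasDerivAt (fun x : ℝ => (1 + Real.exp (-x))⁻¹) (- -Real.exp (-w) / (1 + Real.exp (-w)) ^ 2) w :=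
    h1.inv (ne_of_gt (one_add_exp_pos w))
  have hs : sigmoid = fun x => (1 + Real.exp (-x))⁻¹ := by
    funext x; simp [sigmoid, one_div]
  rw [hs]
  convert h2 using 1
  rw [sder]
  field_simp

lemma deriv_sigmoid (w : ℝ) : deriv sigmoid w = sder w :=
  (sigmoid_hasDerivAt_s18 w).deriv

lemma sder_pos (w : ℝ) : 0 < sder w := by
  rw [sder]; positivity

lemma sder_neg (w : ℝ) : sder (-w) = sder w := by
  rw [sder, sder, neg_neg, Real.exp_neg]
  have h := Real.exp_pos w
  have h2 := one_add_exp_pos (-w)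
  field_simp
  ring

lemma sder_abs (w : ℝ) : sder |w| = sder w := by
  rcases abs_cases w with ⟨h, _⟩ | ⟨h, _⟩
  · rw [h]
  · rw [h, sder_neg]

lemma sder_strictAntiOn : StrictAntiOn sder (Set.Ici 0) := by
  intro a ha b hb hab
  simp only [Set.mem_Ici] at ha hb
  rw [sder, sder]
  have hea := Real.exp_pos (-a)
  have heb := Real.exp_pos (-b)
  have h1 : Real.exp (-b) < Real.exp (-a) := Real.exp_lt_exp.2 (by linarith)
  have h2 : Real.exp (-a) ≤ 1 := Real.exp_le_one_iff.2 (by linarith)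
  rw [div_lt_div_iff₀ (by positivity) (by positivity)]
  have h3 : Real.exp (-a) * Real.exp (-b) < 1 := by nlinarith
  nlinarith [mul_pos (sub_pos.2 h1) (sub_pos.2 h3)]

lemma sder_continuous : Continuous sder :=
  Continuous.div (by continuity) (by continuity) (fun w => by positivity)

lemma sigmoid_injective : Function.Injective sigmoid := by
  intro a b hab
  rw [sigmoid, sigmoid, div_eq_div_iff (ne_of_gt (one_add_exp_pos a)) (ne_of_gt (one_add_exp_pos b))] at hab
  have : Real.exp (-b) = Real.exp (-a) := by linarith
  have := Real.exp_injective this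
  linarith

theorem gd_map_shape
    (wstar γ : ℝ) (hwstar : 0 < wstar) (hγ1 : 1 < γ) (hγ2 : γ < 2)
    (T : ℝ → ℝ)
    (hT : ∀ w, T w = w - (γ / deriv sigmoid wstar) * (sigmoid w - sigmoid wstar)) :
    ∃ wr : ℝ, 0 < wr ∧
      deriv sigmoid wr = deriv sigmoid wstar / γ ∧
      (∀ w, deriv T w = 0 ↔ w = wr ∨ w = -wr) ∧
      (∀ w, w < -wr → 0 < deriv T w) ∧
      (∀ w, wr < w → 0 < deriv T w) ∧
      (∀ w ∈ Set.Ioo (-wr) wr, deriv T w < 0) ∧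
      IsLocalMax T (-wr) ∧ IsLocalMin T wr ∧
      (∀ w, T w = w ↔ w = wstar) := by
  have hγ0 : 0 < γ := by linarith
  have hds : 0 < sder wstar := sder_pos wstar
  set c : ℝ := γ / deriv sigmoid wstar with hc
  have hc' : c = γ / sder wstar := by rw [hc, deriv_sigmoid]
  have hcpos : 0 < c := by rw [hc']; positivity
  -- T as explicit function
  have hTfun : T = fun w => w - c * (sigmoid w - sigmoid wstar) := funext hT
  have hTderiv : ∀ w, HasDerivAt T (1 - c * sder w) w := by
    intro w
    rw [hTfun]
    exact (hasDerivAt_id w).sub (((sigmoid_hasDerivAt_s18 w).sub_const _).const_mul c)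
  have hderivT : ∀ w, deriv T w = 1 - c * sder w := fun w => (hTderiv w).deriv
  -- find wr by IVT
  have hylt : sder wstar / γ < sder wstar := by
    rw [div_lt_iff₀ hγ0]; nlinarith
  have hypos : 0 < sder wstar / γ := by positivity
  set b : ℝ := max wstar (-Real.log (sder wstar / γ)) with hb
  have hbw : wstar ≤ b := le_max_left _ _
  have hsb : sder b ≤ sder wstar / γ := by
    have h1 : sder b ≤ Real.exp (-b) := by
      rw [sder]
      have h2 : (1:ℝ) ≤ (1 + Real.exp (-b))^2 := by nlinarith [Real.exp_pos (-b)]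
      calc Real.exp (-b) / (1 + Real.exp (-b))^2 ≤ Real.exp (-b) / 1 := by
            apply div_le_div_of_nonneg_left (le_of_lt (Real.exp_pos _)) one_pos h2
        _ = Real.exp (-b) := div_one _
    have h3 : Real.exp (-b) ≤ sder wstar / γ := by
      have : -b ≤ Real.log (sder wstar / γ) := by
        have := le_max_right wstar (-Real.log (sder wstar / γ))
        linarith
      calc Real.exp (-b) ≤ Real.exp (Real.log (sder wstar / γ)) := Real.exp_le_exp.2 this
        _ = sder wstar / γ := Real.exp_log hypos
    linarith
  have hivt : sder wstar / γ ∈ sder '' Set.Icc wstar b := by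
    apply intermediate_value_Icc' hbw sder_continuous.continuousOn
    exact ⟨hsb, le_of_lt hylt⟩
  obtain ⟨wr, hwrmem, hwr⟩ := hivt
  have hwr0 : 0 < wr := lt_of_lt_of_le hwstar hwrmem.1
  have hcwr : c * sder wr = 1 := by
    rw [hc', hwr]; field_simp
  -- key sign facts
  have habs : ∀ w, sder w = sder |w| := fun w => (sder_abs w).symm
  have hlt : ∀ w, wr < |w| → sder w < sder wr := by
    intro w hw
    rw [habs w]
    exact sder_strictAntiOn (le_of_lt hwr0) (le_trans (le_of_lt hwr0) (le_of_lt hw)) hw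
  have hgt : ∀ w, |w| < wr → sder wr < sder w := by
    intro w hw
    rw [habs w]
    exact sder_strictAntiOn (abs_nonneg w) (le_of_lt hwr0) hw
  have hderivT_pos : ∀ w, wr < |w| → 0 < deriv T w := by
    intro w hw
    rw [hderivT]
    have := hlt w hw
    nlinarith
  have hderivT_neg : ∀ w, |w| < wr → deriv T w < 0 := by
    intro w hw
    rw [hderivT]
    have := hgt w hw
    nlinarith
  refine ⟨wr, hwr0, ?_, ?_, ?_, ?_, ?_, ?_, ?_, ?_⟩
  · rw [deriv_sigmoid, deriv_sigmoid, hwr]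
  · intro w
    constructor
    · intro h
      rw [hderivT] at h
      have h1 : sder w = sder wr := by
        have : c * sder w = c * sder wr := by rw [hcwr]; linarith
        exact mul_left_cancel₀ (ne_of_gt hcpos) this
      have h2 : sder |w| = sder wr := by rw [← habs w]; exact h1
      have h3 : |w| = wr := sder_strictAntiOn.injOn (Set.mem_Ici.2 (abs_nonneg w))
        (Set.mem_Ici.2 (le_of_lt hwr0)) h2
      rcases abs_eq (le_of_lt hwr0) |>.1 h3 with h | h
      · exact Or.inl h
      · exact Or.inr h
    · rintro (rfl | rfl)
      · rw [hderivT, hcwr]; ring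
      · rw [hderivT, sder_neg, hcwr]; ring
  · intro w hw
    apply hderivT_pos
    rw [abs_of_neg (by linarith)]
    linarith
  · intro w hw
    apply hderivT_pos
    rw [abs_of_pos (by linarith)]
    exact hw
  · intro w hw
    apply hderivT_neg
    exact abs_lt.2 ⟨hw.1, hw.2⟩
  · -- local max at -wr
    have hdiff : Differentiable ℝ T := fun w => (hTderiv w).differentiableAt
    have hmono : MonotoneOn T (Set.Iic (-wr)) := by
      apply monotoneOn_of_deriv_nonneg (convex_Iic _) hdiff.continuous.continuousOn
        (hdiff.differentiableOn)
      intro x hx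
      rw [interior_Iic] at hx
      simp only [Set.mem_Iio] at hx
      refine le_of_lt (hderivT_pos x ?_)
      rw [abs_of_neg (show x < 0 by linarith)]
      linarith
    have hanti : AntitoneOn T (Set.Icc (-wr) wr) := by
      apply antitoneOn_of_deriv_nonpos (convex_Icc _ _) hdiff.continuous.continuousOn
        (hdiff.differentiableOn)
      intro x hx
      rw [interior_Icc] at hx
      exact le_of_lt (hderivT_neg x (abs_lt.2 ⟨hx.1, hx.2⟩))
    have hnb : Set.Iio wr ∈ nhds (-wr) := Iio_mem_nhds (by linarith)
    filter_upwards [hnb] with w hw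
    rcases le_or_gt w (-wr) with h | h
    · exact hmono (Set.mem_Iic.2 h) (Set.mem_Iic.2 le_rfl) h
    · exact hanti (Set.mem_Icc.2 ⟨le_rfl, by linarith⟩)
        (Set.mem_Icc.2 ⟨le_of_lt h, le_of_lt hw⟩) (le_of_lt h)
  · -- local min at wr
    have hdiff : Differentiable ℝ T := fun w => (hTderiv w).differentiableAt
    have hmono : MonotoneOn T (Set.Ici wr) := by
      apply monotoneOn_of_deriv_nonneg (convex_Ici _) hdiff.continuous.continuousOn
        (hdiff.differentiableOn)
      intro x hx
      rw [interior_Ici] at hx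
      simp only [Set.mem_Ioi] at hx
      refine le_of_lt (hderivT_pos x ?_)
      rw [abs_of_pos (by linarith)]
      exact hx
    have hanti : AntitoneOn T (Set.Icc (-wr) wr) := by
      apply antitoneOn_of_deriv_nonpos (convex_Icc _ _) hdiff.continuous.continuousOn
        (hdiff.differentiableOn)
      intro x hx
      rw [interior_Icc] at hx
      exact le_of_lt (hderivT_neg x (abs_lt.2 ⟨hx.1, hx.2⟩))
    have hnb : Set.Ioi (-wr) ∈ nhds wr := Ioi_mem_nhds (by linarith)
    filter_upwards [hnb] with w hw
    rcases le_or_gt wr w with h | h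
    · exact hmono (Set.mem_Ici.2 le_rfl) (Set.mem_Ici.2 h) h
    · exact hanti (Set.mem_Icc.2 ⟨le_of_lt hw, le_of_lt h⟩)
        (Set.mem_Icc.2 ⟨by linarith, le_rfl⟩) (le_of_lt h)
  · intro w
    rw [hT w]
    constructor
    · intro h
      have h1 : c * (sigmoid w - sigmoid wstar) = 0 := by linarith
      have h2 : sigmoid w = sigmoid wstar := by
        rcases mul_eq_zero.1 h1 with h | h
        · exact absurd h (ne_of_gt hcpos)
        · linarith
      exact sigmoid_injective h2
    · rintro rfl; ring
end
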